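/- arXiv:1710.08252 — 2 statements merged into one kernel-verified Lean document; each statement's English description precedes it below -/
import Mathlib

section
/- Let F be a field of characteristic p, 0 ≠ f ∈ F((t)), k ≥ 0, and n ∈ ℕ coprime to p. Let E be the subfield of F((t)) generated over the prime-field rational functions K(t) (K any subfield with t transcendental, e.g. take the field generated by t) by f, ∂^{(1)}f, ..., ∂^{(k)}f, and let L be the subfield generated by f^n, ∂^{(1)}(f^n), ..., ∂^{(k)}(f^n). Then each ∂^{(j)}(f) for 1 ≤ j ≤ k lies in the field L(f); in particular E = L(f) is algebraic over L. -/
noncomputable section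

open HahnSeries

variable {F : Type*} [Field F]

/-- The `n`-th Hasse derivative (hyperderivative) with respect to `t` on Laurent series:
`∂ₜ⁽ⁿ⁾ (∑ xᵢ tⁱ) = ∑ C(i,n) xᵢ t^(i-n)`. -/
def lhasse (n : ℕ) (f : LaurentSeries F) : LaurentSeries F where
  coeff i := ((Ring.choose (i + (n : ℤ)) n : ℤ) : F) * f.coeff (i + (n : ℤ))
  isPWO_support' := by
    have h : (Function.support fun i : ℤ =>
        ((Ring.choose (i + (n : ℤ)) n : ℤ) : F) * f.coeff (i + (n : ℤ))) ⊆
        (fun x : ℤ => x - (n : ℤ)) '' (Function.support f.coeff) := by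
      intro i hi
      have hf : f.coeff (i + (n : ℤ)) ≠ 0 := by
        intro h0
        apply hi
        simp [h0]
      exact ⟨i + n, hf, by ring⟩
    exact (f.isPWO_support'.image_of_monotone
      (fun a b hab => by simpa using hab : Monotone fun x : ℤ => x - (n : ℤ))).mono h

open Finset in
@[simp] lemma lhasse_coeff (u : ℕ) (f : LaurentSeries F) (c : ℤ) :
    (lhasse u f).coeff c = ((Ring.choose (c + (u : ℤ)) u : ℤ) : F) * f.coeff (c + (u : ℤ)) := rfl

/-- Twisted Hasse derivative: `tw u f = t^u * (∂^(u) f)`. -/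
def tw (u : ℕ) (f : LaurentSeries F) : LaurentSeries F where
  coeff c := ((Ring.choose c u : ℤ) : F) * f.coeff c
  isPWO_support' := f.isPWO_support'.mono (by
    intro c hc
    simp only [Function.mem_support, ne_eq] at hc ⊢
    intro h0; exact hc (by rw [h0, mul_zero]))

@[simp] lemma tw_coeff (u : ℕ) (f : LaurentSeries F) (c : ℤ) :
    (tw u f).coeff c = ((Ring.choose c u : ℤ) : F) * f.coeff c := rfl

lemma tw_support (u : ℕ) (f : LaurentSeries F) : (tw u f).support ⊆ f.support := by
  intro c hc
  simp only [HahnSeries.mem_support, tw_coeff, ne_eq] at hc ⊢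
  intro h0; exact hc (by rw [h0, mul_zero])

@[simp] lemma tw_zero_eq (f : LaurentSeries F) : tw 0 f = f := by
  ext c; simp [Ring.choose_zero_right]

@[simp] lemma lhasse_zero_eq (f : LaurentSeries F) : lhasse 0 f = f := by
  ext c; simp [Ring.choose_zero_right]

lemma tw_add (u : ℕ) (f g : LaurentSeries F) : tw u (f + g) = tw u f + tw u g := by
  ext c; simp [mul_add]

lemma tw_one (u : ℕ) (hu : u ≠ 0) : tw u (1 : LaurentSeries F) = 0 := by
  ext c
  simp only [tw_coeff, HahnSeries.coeff_zero]
  rcases eq_or_ne c 0 with rfl | hc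
  · rw [Ring.choose_zero_pos ℤ (Nat.pos_of_ne_zero hu)]; simp
  · rw [HahnSeries.coeff_one, if_neg hc, mul_zero]

lemma lhasse_eq_single_mul (u : ℕ) (f : LaurentSeries F) :
    lhasse u f = single (-(u : ℤ)) 1 * tw u f := by
  ext c
  have h := HahnSeries.coeff_single_mul_add (r := (1:F)) (x := tw u f)
    (a := c + (u:ℤ)) (b := -(u:ℤ))
  have hc : c + (u:ℤ) + -(u:ℤ) = c := by ring
  rw [hc] at h
  rw [h, one_mul]
  simp

lemma tw_eq_single_mul (u : ℕ) (f : LaurentSeries F) :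
    tw u f = single (u : ℤ) 1 * lhasse u f := by
  ext c
  have h := HahnSeries.coeff_single_mul_add (r := (1:F)) (x := lhasse u f)
    (a := c - (u:ℤ)) (b := (u:ℤ))
  have hc : c - (u:ℤ) + (u:ℤ) = c := by ring
  rw [hc] at h
  rw [h, one_mul]
  simp [hc]

section memtransfer
variable (S : Subfield (LaurentSeries F))

lemma single_nat_mem (hT : single (1 : ℤ) (1 : F) ∈ S) (u : ℕ) : single (u : ℤ) (1 : F) ∈ S := by
  induction u with
  | zero => simpa [HahnSeries.single_zero_one] using S.one_mem
  | succ v ih =>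
      have : single ((v : ℤ)) (1:F) * single (1:ℤ) (1:F) = single ((v+1 : ℕ) : ℤ) (1:F) := by
        rw [HahnSeries.single_mul_single, mul_one]; norm_num
      exact this ▸ S.mul_mem ih hT

lemma single_neg_nat_mem (hT : single (1 : ℤ) (1 : F) ∈ S) (u : ℕ) :
    single (-(u : ℤ)) (1 : F) ∈ S := by
  have h1 : single ((u:ℤ)) (1:F) * single (-(u:ℤ)) (1:F) = 1 := by
    rw [HahnSeries.single_mul_single, mul_one, add_neg_cancel, HahnSeries.single_zero_one]
  have hinv : (single ((u:ℤ)) (1:F))⁻¹ = single (-(u:ℤ)) (1:F) := inv_eq_of_mul_eq_one_right h1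
  exact hinv ▸ S.inv_mem (single_nat_mem S hT u)

lemma tw_mem_iff (hT : single (1 : ℤ) (1 : F) ∈ S) (u : ℕ) (f : LaurentSeries F) :
    tw u f ∈ S ↔ lhasse u f ∈ S := by
  constructor
  · intro h
    rw [lhasse_eq_single_mul]
    exact S.mul_mem (single_neg_nat_mem S hT u) h
  · intro h
    rw [tw_eq_single_mul]
    exact S.mul_mem (single_nat_mem S hT u) h

end memtransfer

lemma mul_coeff_both {x y : LaurentSeries F} {s t : Set ℤ}
    (hs : s.IsPWO) (ht : t.IsPWO) (hxs : x.support ⊆ s) (hyt : y.support ⊆ t) (c : ℤ) :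
    (x * y).coeff c = ∑ ij ∈ Finset.addAntidiagonal hs ht c, x.coeff ij.1 * y.coeff ij.2 := by
  rw [HahnSeries.coeff_mul]
  apply Finset.sum_subset
  · intro ij hij
    rw [Finset.mem_addAntidiagonal] at hij; rw [Finset.addAntidiagonal, Finset.mem_addAntidiagonal]
    exact ⟨hxs hij.1, hyt hij.2.1, hij.2.2⟩
  · intro ij hij hnot
    rw [Finset.addAntidiagonal, Finset.mem_addAntidiagonal] at hij; rw [Finset.mem_addAntidiagonal] at hnot
    by_cases h1 : x.coeff ij.1 = 0
    · rw [h1, zero_mul]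
    · by_cases h2 : y.coeff ij.2 = 0
      · rw [h2, mul_zero]
      · exact absurd ⟨h1, h2, hij.2.2⟩ hnot

lemma coeff_sum {α : Type*} (s : Finset α) (f : α → LaurentSeries F) (c : ℤ) :
    (∑ x ∈ s, f x).coeff c = ∑ x ∈ s, (f x).coeff c := by
  classical
  induction s using Finset.induction with
  | empty => simp
  | insert _ _ h ih => simp [Finset.sum_insert h, HahnSeries.coeff_add, ih]

lemma vandermonde_fin {m : ℕ} (a b : ℤ) (i j : Fin m) (hij : (i:ℕ) ≤ (j:ℕ)) :
    ∑ l : Fin m, (if (i:ℕ) ≤ (l:ℕ) ∧ (l:ℕ) ≤ (j:ℕ) then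
      (((Ring.choose a ((l:ℕ) - (i:ℕ)) * Ring.choose b ((j:ℕ) - (l:ℕ)) : ℤ)) : F) else 0)
      = ((Ring.choose (a + b) ((j:ℕ) - (i:ℕ)) : ℤ) : F) := by
  rw [Fin.sum_univ_eq_sum_range (fun l =>
    (if (i:ℕ) ≤ l ∧ l ≤ (j:ℕ) then
      (((Ring.choose a (l - (i:ℕ)) * Ring.choose b ((j:ℕ) - l) : ℤ)) : F) else 0))]
  rw [← Finset.sum_filter]
  have hset : (Finset.range m).filter (fun l => (i:ℕ) ≤ l ∧ l ≤ (j:ℕ))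
      = (Finset.range ((j:ℕ) - (i:ℕ) + 1)).image (fun u => (i:ℕ) + u) := by
    ext l
    simp only [Finset.mem_filter, Finset.mem_range, Finset.mem_image]
    constructor
    · rintro ⟨-, h1, h2⟩
      exact ⟨l - (i:ℕ), by omega, by omega⟩
    · rintro ⟨u, hu, rfl⟩
      have := j.isLt
      omega
  rw [hset, Finset.sum_image (by intro x _ y _ h; simp only at h; omega)]
  have key := Ring.add_choose_eq (r := a) (s := b) ((j:ℕ) - (i:ℕ)) (Commute.all a b)
  rw [Finset.Nat.sum_antidiagonal_eq_sum_range_succ_mk] at key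
  rw [key]
  push_cast
  apply Finset.sum_congr rfl
  intro u hu
  rw [Finset.mem_range] at hu
  have e1 : (i:ℕ) + u - (i:ℕ) = u := by omega
  have e2 : (j:ℕ) - ((i:ℕ) + u) = (j:ℕ) - (i:ℕ) - u := by omega
  rw [e1, e2]

def rho (k : ℕ) : LaurentSeries F →+* Matrix (Fin (k+1)) (Fin (k+1)) (LaurentSeries F) where
  toFun f := Matrix.of fun i j => if (i:ℕ) ≤ (j:ℕ) then tw ((j:ℕ) - (i:ℕ)) f else 0
  map_one' := by
    ext i j : 1
    simp only [Matrix.of_apply, Matrix.one_apply]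
    rcases lt_trichotomy ((i:ℕ)) ((j:ℕ)) with h | h | h
    · rw [if_pos h.le, if_neg (by exact fun hc => by simp [Fin.ext_iff] at hc; omega),
        tw_one _ (by omega)]
    · rw [if_pos h.le, if_pos (Fin.ext h), h, Nat.sub_self, tw_zero_eq]
    · rw [if_neg (by omega), if_neg (by exact fun hc => by simp [Fin.ext_iff] at hc; omega)]
  map_zero' := by
    ext i j : 1
    simp only [Matrix.of_apply, Matrix.zero_apply]
    split_ifs
    · ext c; simp
    · rfl
  map_add' f g := by
    ext i j : 1
    simp only [Matrix.of_apply, Matrix.add_apply]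
    split_ifs
    · rw [tw_add]
    · rw [add_zero]
  map_mul' f g := by
    ext i j : 1
    rw [Matrix.mul_apply]
    simp only [Matrix.of_apply]
    by_cases hij : (i:ℕ) ≤ (j:ℕ)
    swap
    · rw [if_neg hij]
      symm
      apply Finset.sum_eq_zero
      intro l _
      by_cases h1 : (i:ℕ) ≤ (l:ℕ)
      · have h2 : ¬ ((l:ℕ) ≤ (j:ℕ)) := by omega
        rw [if_neg h2, mul_zero]
      · rw [if_neg h1, zero_mul]
    · rw [if_pos hij]
      ext c
      rw [_root_.coeff_sum]
      have hRHS : ∀ l : Fin (k+1),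
          ((if (i:ℕ) ≤ (l:ℕ) then tw ((l:ℕ) - (i:ℕ)) f else 0) *
            (if (l:ℕ) ≤ (j:ℕ) then tw ((j:ℕ) - (l:ℕ)) g else 0)).coeff c
          = ∑ ij ∈ Finset.addAntidiagonal f.isPWO_support' g.isPWO_support' c,
              (if (i:ℕ) ≤ (l:ℕ) ∧ (l:ℕ) ≤ (j:ℕ) then
                ((Ring.choose ij.1 ((l:ℕ) - (i:ℕ)) *
                  Ring.choose ij.2 ((j:ℕ) - (l:ℕ)) : ℤ) : F) else 0)
                * (f.coeff ij.1 * g.coeff ij.2) := by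
        intro l
        by_cases h1 : (i:ℕ) ≤ (l:ℕ)
        · by_cases h2 : (l:ℕ) ≤ (j:ℕ)
          · rw [if_pos h1, if_pos h2,
              mul_coeff_both f.isPWO_support' g.isPWO_support' (tw_support _ f) (tw_support _ g)]
            apply Finset.sum_congr rfl
            intro ij _
            rw [if_pos ⟨h1, h2⟩, tw_coeff, tw_coeff]
            push_cast
            ring
          · rw [if_neg h2, mul_zero]
            symm
            apply Finset.sum_eq_zero
            intro ij _
            rw [if_neg (by exact fun hc => h2 hc.2), zero_mul]
        · rw [if_neg h1, zero_mul]
          symm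
          apply Finset.sum_eq_zero
          intro ij _
          rw [if_neg (by exact fun hc => h1 hc.1), zero_mul]
      rw [Finset.sum_congr rfl (fun l _ => hRHS l), Finset.sum_comm]
      rw [tw_coeff, HahnSeries.coeff_mul, Finset.mul_sum]
      apply Finset.sum_congr rfl
      intro ij hij'
      rw [← Finset.sum_mul, vandermonde_fin ij.1 ij.2 i j hij]
      rw [Finset.mem_addAntidiagonal] at hij'
      rw [hij'.2.2]

lemma rho_apply (k : ℕ) (f : LaurentSeries F) (i j : Fin (k+1)) :
    rho k f i j = if (i:ℕ) ≤ (j:ℕ) then tw ((j:ℕ) - (i:ℕ)) f else 0 := rfl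

lemma rho_tri {k : ℕ} (f : LaurentSeries F) (i j : Fin (k+1)) (h : (j:ℕ) < (i:ℕ)) :
    rho k f i j = 0 := if_neg (by omega)

lemma rho_diag {k : ℕ} (f : LaurentSeries F) (i : Fin (k+1)) : rho k f i i = f := by
  rw [rho_apply, if_pos le_rfl, Nat.sub_self, tw_zero_eq]

lemma strict_tri_pow_entry_zero {m : ℕ} (N : Matrix (Fin m) (Fin m) (LaurentSeries F))
    (hN : ∀ i j : Fin m, (j:ℕ) ≤ (i:ℕ) → N i j = 0) :
    ∀ r : ℕ, ∀ i j : Fin m, (j:ℕ) < (i:ℕ) + r → (N ^ r) i j = 0 := by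
  intro r
  induction r with
  | zero =>
      intro i j h
      rw [pow_zero, Matrix.one_apply_ne (by intro hc; subst hc; omega)]
  | succ r ih =>
      intro i j h
      rw [pow_succ, Matrix.mul_apply]
      apply Finset.sum_eq_zero
      intro l _
      by_cases hl : (j:ℕ) ≤ (l:ℕ)
      · rw [hN l j hl, mul_zero]
      · rw [ih i l (by omega), zero_mul]

lemma strict_tri_pow_zero {m : ℕ} (N : Matrix (Fin m) (Fin m) (LaurentSeries F))
    (hN : ∀ i j : Fin m, (j:ℕ) ≤ (i:ℕ) → N i j = 0) (r : ℕ) (hr : m ≤ r) : N ^ r = 0 := by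
  have : N ^ m = 0 := by
    ext i j : 1
    rw [strict_tri_pow_entry_zero N hN m i j (by omega), Matrix.zero_apply]
  rw [show r = m + (r - m) by omega, _root_.pow_add, this, zero_mul]

lemma rho_pow_char {k : ℕ} (p s : ℕ) [Fact p.Prime] [CharP F p] (f : LaurentSeries F)
    (hq : k + 1 ≤ p ^ s) :
    rho k (f ^ (p ^ s)) = Matrix.scalar (Fin (k+1)) (f ^ (p ^ s)) := by
  haveI : CharP (LaurentSeries F) p := charP_of_injective_ringHom (HahnSeries.C_injective (Γ := ℤ) (R := F)) p
  set N := rho k f - Matrix.scalar (Fin (k+1)) f with hNdef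
  have hN : ∀ i j : Fin (k+1), (j:ℕ) ≤ (i:ℕ) → N i j = 0 := by
    intro i j h
    rcases eq_or_lt_of_le h with h' | h'
    · have hij : i = j := Fin.ext h'.symm
      subst hij
      simp [hNdef, rho_diag, Matrix.scalar_apply, Matrix.diagonal_apply]
    · have hne : ¬ i = j := by intro hc; subst hc; omega
      simp [hNdef, rho_tri f i j h', Matrix.scalar_apply, Matrix.diagonal_apply, hne]
  have hc : Commute (Matrix.scalar (Fin (k+1)) f) N :=
    Matrix.scalar_commute f (fun r' => Commute.all f r') N
  have hsum : rho k f = Matrix.scalar (Fin (k+1)) f + N := by rw [hNdef]; abel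
  rw [map_pow, hsum, add_pow_char_pow_of_commute _ _ hc,
    strict_tri_pow_zero N hN _ hq, add_zero, ← map_pow]

lemma entries_one_mem (S : Subfield (LaurentSeries F)) {m : ℕ} (i j : Fin m) :
    (1 : Matrix (Fin m) (Fin m) (LaurentSeries F)) i j ∈ S := by
  rw [Matrix.one_apply]
  split_ifs
  · exact S.one_mem
  · exact S.zero_mem

lemma entries_mul_mem (S : Subfield (LaurentSeries F)) {m : ℕ}
    {A B : Matrix (Fin m) (Fin m) (LaurentSeries F)}
    (hA : ∀ i j, A i j ∈ S) (hB : ∀ i j, B i j ∈ S) : ∀ i j, (A * B) i j ∈ S := by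
  intro i j
  rw [Matrix.mul_apply]
  exact Subfield.sum_mem S fun l _ => S.mul_mem (hA i l) (hB l j)

lemma entries_pow_mem (S : Subfield (LaurentSeries F)) {m : ℕ}
    {A : Matrix (Fin m) (Fin m) (LaurentSeries F)}
    (hA : ∀ i j, A i j ∈ S) (n : ℕ) : ∀ i j, (A ^ n) i j ∈ S := by
  induction n with
  | zero => intro i j; rw [pow_zero]; exact entries_one_mem S i j
  | succ r ih =>
      rw [pow_succ]
      exact entries_mul_mem S ih hA

lemma entries_inv_mem (S : Subfield (LaurentSeries F)) {m : ℕ}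
    {A B : Matrix (Fin m) (Fin m) (LaurentSeries F)}
    (hAB : A * B = 1) (hBA : B * A = 1)
    (htri : ∀ i j : Fin m, (j:ℕ) < (i:ℕ) → A i j = 0) (hdiag : ∀ i, A i i ≠ 0)
    (hA : ∀ i j, A i j ∈ S) : ∀ i j, B i j ∈ S := by
  classical
  set A0 : Matrix (Fin m) (Fin m) S := Matrix.of fun i j => (⟨A i j, hA i j⟩ : S) with hA0def
  have hmap : (S.subtype).mapMatrix A0 = A := by
    ext i j : 1
    simp [hA0def, RingHom.mapMatrix_apply, Matrix.map_apply]
  have htri0 : A0.BlockTriangular id := by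
    intro i j h
    exact Subtype.ext (htri i j h)
  have hdet : IsUnit A0.det := by
    rw [Matrix.det_of_upperTriangular htri0]
    refine isUnit_iff_ne_zero.mpr (Finset.prod_ne_zero_iff.mpr fun i _ => ?_)
    intro h0
    exact hdiag i (by simpa [hA0def] using congrArg Subtype.val h0)
  obtain ⟨u, hu⟩ := (Matrix.isUnit_iff_isUnit_det _).mpr hdet
  have h1 : A * (S.subtype).mapMatrix ↑u⁻¹ = 1 := by
    rw [← hmap, ← map_mul, ← hu, Units.mul_inv, map_one]
  have hB : B = (S.subtype).mapMatrix ↑u⁻¹ := by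
    calc B = B * (A * (S.subtype).mapMatrix ↑u⁻¹) := by rw [h1, mul_one]
      _ = (B * A) * (S.subtype).mapMatrix ↑u⁻¹ := by rw [mul_assoc]
      _ = (S.subtype).mapMatrix ↑u⁻¹ := by rw [hBA, one_mul]
  intro i j
  rw [hB]
  simpa [RingHom.mapMatrix_apply, Matrix.map_apply] using ((↑u⁻¹ : Matrix (Fin m) (Fin m) S) i j).2

lemma entries_rho_zpow_mem {k : ℕ} (S : Subfield (LaurentSeries F)) (g : LaurentSeries F)
    (hg : g ≠ 0) (hent : ∀ i j : Fin (k+1), rho k g i j ∈ S) :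
    ∀ z : ℤ, ∀ i j : Fin (k+1), rho k (g ^ z) i j ∈ S := by
  intro z
  cases z with
  | ofNat n =>
      rw [Int.ofNat_eq_coe, zpow_natCast, map_pow]
      exact entries_pow_mem S hent n
  | negSucc n =>
      rw [zpow_negSucc]
      have hh : g ^ (n+1) ≠ 0 := pow_ne_zero _ hg
      apply entries_inv_mem S (A := rho k (g ^ (n+1)))
      · rw [← map_mul, mul_inv_cancel₀ hh, map_one]
      · rw [← map_mul, inv_mul_cancel₀ hh, map_one]
      · exact fun i j h => rho_tri _ i j h
      · intro i; rw [rho_diag]; exact hh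
      · rw [map_pow]; exact entries_pow_mem S hent (n+1)

lemma rho_scalar_zpow {k : ℕ} (c : LaurentSeries F) (hc : c ≠ 0)
    (hsc : rho k c = Matrix.scalar (Fin (k+1)) c) :
    ∀ z : ℤ, rho k (c ^ z) = Matrix.scalar (Fin (k+1)) (c ^ z) := by
  intro z
  have hscn : ∀ q : ℕ, rho k (c ^ q) = Matrix.scalar (Fin (k+1)) (c ^ q) := by
    intro q
    rw [map_pow, hsc, ← map_pow]
  cases z with
  | ofNat n => rw [Int.ofNat_eq_coe, zpow_natCast, hscn]
  | negSucc n =>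
      have h1 : (c ^ (Int.negSucc n)) * c ^ (n+1) = 1 := by
        rw [zpow_negSucc]
        exact inv_mul_cancel₀ (pow_ne_zero _ hc)
      have h2 : rho k (c ^ (n+1)) * (Matrix.scalar (Fin (k+1)) (c ^ (Int.negSucc n))) = 1 := by
        rw [hscn, ← map_mul, show (c^(n+1) * c ^ (Int.negSucc n)) = 1 from by
          rw [mul_comm]; exact h1, map_one]
      calc rho k (c ^ Int.negSucc n)
          = rho k (c ^ Int.negSucc n) *
              (rho k (c ^ (n+1)) * Matrix.scalar (Fin (k+1)) (c ^ Int.negSucc n)) := by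
            rw [h2, mul_one]
        _ = (rho k (c ^ Int.negSucc n) * rho k (c ^ (n+1))) *
              Matrix.scalar (Fin (k+1)) (c ^ Int.negSucc n) := by
            rw [mul_assoc]
        _ = Matrix.scalar (Fin (k+1)) (c ^ Int.negSucc n) := by
            rw [← map_mul, h1, map_one, one_mul]


/-- Let `f ≠ 0` in `F((t))` (char `p`), `k ≥ 0` and `n` coprime to `p`.
Let `E` be the subfield generated (over the prime field) by `t` and
`f, ∂⁽¹⁾f, …, ∂⁽ᵏ⁾f`, and `L` the subfield generated by `t` and
`fⁿ, ∂⁽¹⁾(fⁿ), …, ∂⁽ᵏ⁾(fⁿ)`. Then each `∂⁽ʲ⁾f` (`j ≤ k`) lies in `L(f)`,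
and in particular `E = L(f)`. -/
theorem hasse_field_ext (p : ℕ) [Fact p.Prime] [CharP F p]
    (f : LaurentSeries F) (hf : f ≠ 0) (k n : ℕ) (hn : Nat.Coprime n p)
    (E L : Subfield (LaurentSeries F))
    (hE : E = Subfield.closure
      ({HahnSeries.single (1 : ℤ) (1 : F)} ∪ {x | ∃ j ≤ k, x = lhasse j f}))
    (hL : L = Subfield.closure
      ({HahnSeries.single (1 : ℤ) (1 : F)} ∪ {x | ∃ j ≤ k, x = lhasse j (f ^ n)})) :
    (∀ j ≤ k, lhasse j f ∈ Subfield.closure ((L : Set (LaurentSeries F)) ∪ {f})) ∧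
      E = Subfield.closure ((L : Set (LaurentSeries F)) ∪ {f}) := by
  classical
  set M := Subfield.closure ((L : Set (LaurentSeries F)) ∪ {f}) with hM
  have htL : single (1:ℤ) (1:F) ∈ L := by
    rw [hL]; exact Subfield.subset_closure (Or.inl rfl)
  have hLM : ∀ x ∈ L, x ∈ M := fun x hx => Subfield.subset_closure (Or.inl hx)
  have htM : single (1:ℤ) (1:F) ∈ M := hLM _ htL
  have hfM : f ∈ M := Subfield.subset_closure (Or.inr rfl)
  have htE : single (1:ℤ) (1:F) ∈ E := by
    rw [hE]; exact Subfield.subset_closure (Or.inl rfl)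
  have hdE : ∀ j, j ≤ k → lhasse j f ∈ E := fun j hj => by
    rw [hE]; exact Subfield.subset_closure (Or.inr ⟨j, hj, rfl⟩)
  have hdL : ∀ j, j ≤ k → lhasse j (f ^ n) ∈ L := fun j hj => by
    rw [hL]; exact Subfield.subset_closure (Or.inr ⟨j, hj, rfl⟩)
  have hfE : f ∈ E := by
    have := hdE 0 (Nat.zero_le k); rwa [lhasse_zero_eq] at this
  have hentL : ∀ i j : Fin (k+1), rho k (f ^ n) i j ∈ L := by
    intro i j
    rw [rho_apply]
    split_ifs with h
    · exact (tw_mem_iff L htL _ _).mpr (hdL _ (by have := j.isLt; omega))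
    · exact L.zero_mem
  have hentE : ∀ i j : Fin (k+1), rho k f i j ∈ E := by
    intro i j
    rw [rho_apply]
    split_ifs with h
    · exact (tw_mem_iff E htE _ _).mpr (hdE _ (by have := j.isLt; omega))
    · exact E.zero_mem
  set q := p ^ (k+1) with hqdef
  have hq : k + 1 ≤ q := by
    calc k + 1 ≤ 2 ^ (k+1) := by
          have := Nat.lt_two_pow_self (n := k+1); omega
      _ ≤ p ^ (k+1) := Nat.pow_le_pow_left (Fact.out : p.Prime).two_le (k+1)
  have hcop : Nat.Coprime n q := hn.pow_right (k+1)
  have hbez : (1 : ℤ) = (n : ℤ) * Nat.gcdA n q + (q : ℤ) * Nat.gcdB n q := by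
    have h := Nat.gcd_eq_gcd_ab n q
    rw [hcop] at h
    simpa using h
  set A := Nat.gcdA n q with hA
  set B := Nat.gcdB n q with hB
  have hfq : (f ^ q : LaurentSeries F) ≠ 0 := pow_ne_zero _ hf
  have hfn : (f ^ n : LaurentSeries F) ≠ 0 := pow_ne_zero _ hf
  have hfactor : ((f ^ n : LaurentSeries F) ^ A) * ((f ^ q) ^ B) = f := by
    rw [← zpow_natCast f n, ← zpow_natCast f q, ← zpow_mul, ← zpow_mul,
      ← zpow_add₀ hf, ← hbez, zpow_one]
  have hsc : rho k (f ^ q) = Matrix.scalar (Fin (k+1)) (f ^ q) := rho_pow_char p (k+1) f hq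
  have hscB : rho k ((f ^ q) ^ B) = Matrix.scalar (Fin (k+1)) ((f ^ q) ^ B) :=
    rho_scalar_zpow _ hfq hsc B
  have part1 : ∀ j, j ≤ k → lhasse j f ∈ M := by
    intro j hj
    have hjlt : j < k + 1 := by omega
    refine (tw_mem_iff M htM j f).mp ?_
    have hEntry : tw j f = rho k f (0 : Fin (k+1)) ⟨j, hjlt⟩ := by
      rw [rho_apply]
      simp
    rw [hEntry, ← hfactor, map_mul, hscB, Matrix.scalar_apply, Matrix.mul_diagonal]
    refine M.mul_mem (hLM _ (entries_rho_zpow_mem L (f ^ n) hfn hentL A _ _)) ?_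
    exact M.zpow_mem (pow_mem hfM q) B
  constructor
  · exact part1
  · apply le_antisymm
    · rw [hE]
      rw [hM]; refine Subfield.closure_le.mpr ?_
      intro x hx
      rcases hx with hx | hx
      · rw [Set.mem_singleton_iff] at hx; subst hx; exact htM
      · obtain ⟨j, hj, rfl⟩ := hx
        exact part1 j hj
    · rw [hM]
      refine Subfield.closure_le.mpr ?_
      intro x hx
      rcases hx with hx | hx
      · -- x ∈ L
        have hLE : L ≤ E := by
          rw [hL]
          refine Subfield.closure_le.mpr ?_
          intro y hy
          rcases hy with hy | hy
          · rw [Set.mem_singleton_iff] at hy; subst hy; exact htE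
          · obtain ⟨j, hj, rfl⟩ := hy
            have hjlt : j < k + 1 := by omega
            refine (tw_mem_iff E htE j (f ^ n)).mp ?_
            have hEntry : tw j (f ^ n) = rho k (f ^ n) (0 : Fin (k+1)) ⟨j, hjlt⟩ := by
              rw [rho_apply]
              simp
            rw [hEntry, map_pow]
            exact entries_pow_mem E hentE n _ _
        exact hLE hx
      · rw [Set.mem_singleton_iff] at hx; subst hx; exact hfE
end
end

section
/- Let F be a field of characteristic p, n ∈ ℕ with exact p-adic valuation s (i.e., p^s ∥ n), and f ∈ F((t)) a nonzero Laurent series. Write g = f^{n/p^s}. Then for 0 ≤ i ≤ n−1: ∂_t^{(i)}(f^n) = 0 if p^s does not divide i, and ∂_t^{(i)}(f^n) = (∂_t^{(i/p^s)}(g))^{p^s} if p^s divides i. -/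
noncomputable section

open HahnSeries

variable {F : Type*} [Field F]

theorem aux_coeff_sum {α : Type*} (s : Finset α) (f : α → LaurentSeries F) (z : ℤ) :
    (∑ a ∈ s, f a).coeff z = ∑ a ∈ s, (f a).coeff z :=
  map_sum (HahnSeries.coeff.addMonoidHom z) f s

instance aux_charP (p : ℕ) [CharP F p] : CharP (LaurentSeries F) p :=
  charP_of_injective_ringHom (HahnSeries.C_injective (Γ := ℤ) (R := F)) p

theorem aux_coeff_pow_prime (p : ℕ) [Fact p.Prime] [CharP F p] (h : LaurentSeries F) (z : ℤ) :
    (h ^ p).coeff z = if (p : ℤ) ∣ z then (h.coeff (z / p)) ^ p else 0 := by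
  have hp : p.Prime := Fact.out
  set B : ℤ := |z| with hB
  have hfin : (h.support ∩ Set.Iic B).Finite := by
    rcases eq_or_ne h 0 with rfl | hh
    · simp
    · exact (Set.finite_Icc h.order B).subset
        (fun e ⟨he1, he2⟩ => ⟨HahnSeries.order_le_of_coeff_ne_zero he1, he2⟩)
  set S := hfin.toFinset with hS
  set fin : LaurentSeries F := ∑ e ∈ S, HahnSeries.single e (h.coeff e) with hfinDef
  have coeff_fin : ∀ e : ℤ, fin.coeff e = if e ∈ S then h.coeff e else 0 := by
    intro e
    rw [hfinDef, aux_coeff_sum]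
    simp only [HahnSeries.coeff_single]
    by_cases he : e ∈ S
    · rw [if_pos he]
      refine (Finset.sum_eq_single_of_mem e he fun b _ hb => ?_).trans (if_pos rfl)
      exact if_neg fun hc => hb hc.symm
    · rw [if_neg he]
      refine Finset.sum_eq_zero fun b hb => ?_
      exact if_neg fun hc => he (by rwa [← hc] at hb)
  have mem_S : ∀ e : ℤ, e ≤ B → e ∉ S → h.coeff e = 0 := by
    intro e he hnot
    by_contra hc
    exact hnot (hfin.mem_toFinset.mpr ⟨hc, he⟩)
  set tail : LaurentSeries F := h - fin with htailDef
  have tail_coeff_le : ∀ e : ℤ, e ≤ B → tail.coeff e = 0 := by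
    intro e he
    rw [htailDef, HahnSeries.coeff_sub, coeff_fin]
    by_cases hmem : e ∈ S
    · simp [hmem]
    · simp [hmem, mem_S e he hmem]
  have hsplit : h ^ p = fin ^ p + tail ^ p := by
    have hh : h = fin + tail := by rw [htailDef]; ring
    rw [hh, add_pow_char]
  have coeff_tail_pow : (tail ^ p).coeff z = 0 := by
    rcases eq_or_ne tail 0 with ht | ht
    · rw [ht, zero_pow hp.ne_zero, HahnSeries.coeff_zero]
    · apply HahnSeries.coeff_eq_zero_of_lt_order
      have h1 : B < tail.order := by
        by_contra hle
        push_neg at hle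
        exact HahnSeries.coeff_order_eq_zero.not.mpr ht (tail_coeff_le _ hle)
      rw [HahnSeries.order_pow, nsmul_eq_mul]
      have hB0 : 0 ≤ B := abs_nonneg z
      have hp1 : (1 : ℤ) ≤ (p : ℤ) := by exact_mod_cast hp.one_lt.le
      nlinarith [le_abs_self z]
  have hfinpow : fin ^ p = ∑ e ∈ S, HahnSeries.single ((p : ℤ) * e) ((h.coeff e) ^ p) := by
    rw [hfinDef, sum_pow_char]
    refine Finset.sum_congr rfl fun e _ => ?_
    rw [HahnSeries.single_pow, nsmul_eq_mul]
  have coeff_fin_pow : (fin ^ p).coeff z = if (p : ℤ) ∣ z then (h.coeff (z / p)) ^ p else 0 := by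
    rw [hfinpow, aux_coeff_sum]
    simp only [HahnSeries.coeff_single]
    by_cases hd : (p : ℤ) ∣ z
    · obtain ⟨w, rfl⟩ := hd
      have hpne : (p : ℤ) ≠ 0 := by exact_mod_cast hp.ne_zero
      rw [if_pos ⟨w, rfl⟩, Int.mul_ediv_cancel_left _ hpne]
      trans (if w ∈ S then (h.coeff w) ^ p else 0)
      · simp only [mul_right_inj' hpne]
        exact Finset.sum_ite_eq S w fun x => (h.coeff x) ^ p
      by_cases hw : w ∈ S
      · rw [if_pos hw]
      · rw [if_neg hw, mem_S w ?_ hw, zero_pow hp.ne_zero]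
        calc w ≤ |w| := le_abs_self w
          _ ≤ |(p : ℤ) * w| := by
              rw [abs_mul]
              have h1 : (1 : ℤ) ≤ |(p : ℤ)| := by
                rw [abs_of_nonneg (by positivity)]
                exact_mod_cast hp.one_lt.le
              nlinarith [abs_nonneg w]
          _ = B := rfl
    · rw [if_neg hd]
      apply Finset.sum_eq_zero
      intro e _
      rw [if_neg]
      intro hc
      exact hd ⟨e, hc⟩
  rw [hsplit, HahnSeries.coeff_add, coeff_tail_pow, coeff_fin_pow, add_zero]

theorem aux_coeff_pow_prime_pow (p : ℕ) [Fact p.Prime] [CharP F p] (s : ℕ)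
    (h : LaurentSeries F) (z : ℤ) :
    (h ^ p ^ s).coeff z =
      if ((p ^ s : ℕ) : ℤ) ∣ z then (h.coeff (z / (p ^ s : ℕ))) ^ p ^ s else 0 := by
  induction s generalizing z with
  | zero => simp
  | succ s IH =>
    have hp : p.Prime := Fact.out
    have hpow : h ^ p ^ (s + 1) = (h ^ p ^ s) ^ p := by rw [← pow_mul, pow_succ]
    rw [hpow, aux_coeff_pow_prime p]
    by_cases hd : (p : ℤ) ∣ z
    · obtain ⟨w, rfl⟩ := hd
      have hpne : (p : ℤ) ≠ 0 := by exact_mod_cast hp.ne_zero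
      rw [if_pos ⟨w, rfl⟩, Int.mul_ediv_cancel_left _ hpne, IH]
      by_cases hd2 : ((p ^ s : ℕ) : ℤ) ∣ w
      · obtain ⟨v, rfl⟩ := hd2
        have hq1 : ((p ^ s : ℕ) : ℤ) ≠ 0 :=
          Int.natCast_ne_zero.mpr (pow_ne_zero _ hp.ne_zero)
        have hq2 : ((p ^ (s + 1) : ℕ) : ℤ) ≠ 0 :=
          Int.natCast_ne_zero.mpr (pow_ne_zero _ hp.ne_zero)
        have he1 : ((p ^ s : ℕ) : ℤ) * v / ((p ^ s : ℕ) : ℤ) = v :=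
          Int.mul_ediv_cancel_left _ hq1
        have hdvd : ((p ^ (s + 1) : ℕ) : ℤ) ∣ (p : ℤ) * (((p ^ s : ℕ) : ℤ) * v) :=
          ⟨v, by push_cast; ring⟩
        rw [if_pos ⟨v, by push_cast; ring⟩, if_pos hdvd, he1]
        have he2 : (p : ℤ) * (((p ^ s : ℕ) : ℤ) * v) / ((p ^ (s + 1) : ℕ) : ℤ) = v := by
          rw [show (p : ℤ) * (((p ^ s : ℕ) : ℤ) * v) = ((p ^ (s + 1) : ℕ) : ℤ) * v by
            push_cast; ring]
          exact Int.mul_ediv_cancel_left _ hq2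
        rw [he2, ← pow_mul, pow_succ]
      · rw [if_neg hd2, if_neg, zero_pow hp.ne_zero]
        intro hc
        apply hd2
        obtain ⟨v, hv⟩ := hc
        refine ⟨v, mul_left_cancel₀ hpne ?_⟩
        rw [hv]; push_cast; ring
    · rw [if_neg, if_neg]
      · intro hc
        exact hd (dvd_trans (by exact_mod_cast dvd_pow_self (p : ℤ) (Nat.succ_ne_zero s)) hc)
      · exact hd

theorem aux_zmod_to_field (p : ℕ) [Fact p.Prime] [CharP F p] (c d : ℤ)
    (h : ((c : ZMod p)) = (d : ZMod p)) : (c : F) = (d : F) := by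
  have h1 : ((c - d : ℤ) : ZMod p) = 0 := by push_cast; rw [h]; ring
  have h2 : (p : ℤ) ∣ c - d := by rwa [ZMod.intCast_zmod_eq_zero_iff_dvd] at h1
  have h3 : ((c - d : ℤ) : F) = 0 := (CharP.intCast_eq_zero_iff F p _).mpr h2
  push_cast at h3
  exact sub_eq_zero.mp h3

theorem aux_intCast_pow (p : ℕ) [Fact p.Prime] [CharP F p] (s : ℕ) (c : ℤ) :
    (c : F) ^ p ^ s = (c : F) := by
  have h : ((c ^ p ^ s : ℤ) : ZMod p) = (c : ZMod p) := by
    push_cast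
    exact ZMod.pow_card_pow _
  have h2 := aux_zmod_to_field (F := F) p _ _ h
  push_cast at h2
  exact h2

theorem aux_lucas_step (p : ℕ) [Fact p.Prime] (a i : ℕ) :
    ((a.choose i : ZMod p)) = ((a % p).choose (i % p) : ZMod p) * ((a / p).choose (i / p) : ZMod p) := by
  have h := Choose.choose_modEq_choose_mod_mul_choose_div_nat (n := a) (k := i) (p := p)
  have h2 := (ZMod.natCast_eq_natCast_iff _ _ _).mpr h
  push_cast at h2
  exact h2

theorem aux_lucas_two (p : ℕ) [Fact p.Prime] (s : ℕ) : ∀ a b : ℕ,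
    (((p ^ s * a).choose (p ^ s * b) : ZMod p)) = (a.choose b : ZMod p) := by
  induction s with
  | zero => simp
  | succ s IH =>
    intro a b
    have hp : p.Prime := Fact.out
    have hp0 : 0 < p := hp.pos
    have e1 : p ^ (s + 1) * a = p * (p ^ s * a) := by ring
    have e2 : p ^ (s + 1) * b = p * (p ^ s * b) := by ring
    rw [e1, e2, aux_lucas_step p]
    rw [Nat.mul_mod_right, Nat.mul_mod_right, Nat.mul_div_cancel_left _ hp0,
      Nat.mul_div_cancel_left _ hp0]
    simp [IH]

theorem aux_lucas_one (p : ℕ) [Fact p.Prime] (s : ℕ) : ∀ a i : ℕ,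
    p ^ s ∣ a → ¬ p ^ s ∣ i → ((a.choose i : ZMod p)) = 0 := by
  induction s with
  | zero => intro a i _ h; exact absurd (one_dvd i) h
  | succ s IH =>
    intro a i ha hi
    have hp : p.Prime := Fact.out
    have hp0 : 0 < p := hp.pos
    have hpa : p ∣ a := dvd_trans (dvd_pow_self p (Nat.succ_ne_zero s)) ha
    have hamod : a % p = 0 := Nat.mod_eq_zero_of_dvd hpa
    rw [aux_lucas_step p, hamod]
    by_cases hpi : p ∣ i
    · have himod : i % p = 0 := Nat.mod_eq_zero_of_dvd hpi
      rw [himod]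
      have hIH : ((a / p).choose (i / p) : ZMod p) = 0 := by
        apply IH
        · obtain ⟨t, rfl⟩ := ha
          rw [pow_succ, mul_assoc, mul_comm p, ← mul_assoc, Nat.mul_div_cancel _ hp0]
          exact ⟨t, rfl⟩
        · intro hc
          apply hi
          obtain ⟨u, hu⟩ := hc
          obtain ⟨v, rfl⟩ := hpi
          rw [Nat.mul_div_cancel_left _ hp0] at hu
          exact ⟨u, by rw [hu]; ring⟩
      rw [hIH, mul_zero]
    · have himod : i % p ≠ 0 := fun hc => hpi (Nat.dvd_of_mod_eq_zero hc)
      rw [Nat.choose_eq_zero_of_lt (Nat.pos_of_ne_zero himod)]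
      simp

theorem aux_shift (p : ℕ) [Fact p.Prime] (z : ℤ) (n T : ℕ) (h1 : n < p ^ T)
    (h2 : 0 ≤ z + (p ^ T : ℕ)) :
    ((Ring.choose z n : ℤ) : ZMod p) = ((z + (p ^ T : ℕ)).toNat.choose n : ZMod p) := by
  have hp : p.Prime := Fact.out
  have key := Ring.add_choose_eq (R := ℤ) (r := z) (s := ((p ^ T : ℕ) : ℤ)) n (Commute.all _ _)
  have hcast : (((z + (p ^ T : ℕ)).toNat : ℤ)) = z + (p ^ T : ℕ) := Int.toNat_of_nonneg h2
  have hleft := Ring.choose_natCast (R := ℤ) ((z + (p ^ T : ℕ)).toNat) n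
  rw [hcast] at hleft
  rw [hleft] at key
  have hright : ∀ ij ∈ Finset.HasAntidiagonal.antidiagonal n,
      Ring.choose z ij.1 * Ring.choose ((p ^ T : ℕ) : ℤ) ij.2
        = Ring.choose z ij.1 * ((p ^ T).choose ij.2 : ℤ) := fun ij _ => by
    rw [Ring.choose_natCast]
  rw [Finset.sum_congr rfl hright] at key
  have key2 := congrArg (fun x : ℤ => (x : ZMod p)) key
  simp only [Int.cast_natCast, Int.cast_sum, Int.cast_mul] at key2
  rw [Finset.sum_eq_single (n, 0)] at key2
  · simpa using key2.symm
  · rintro ⟨b1, b2⟩ hb hne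
    rw [Finset.HasAntidiagonal.mem_antidiagonal] at hb
    have hb2 : b2 ≠ 0 := by
      rintro rfl
      exact hne (by simp [← hb])
    have hb2' : b2 ≠ p ^ T := by omega
    have hdvd : p ∣ (p ^ T).choose b2 := hp.dvd_choose_pow hb2 hb2'
    have hz : (((p ^ T).choose b2 : ℕ) : ZMod p) = 0 := by
      rw [ZMod.natCast_eq_zero_iff]
      exact hdvd
    rw [hz, mul_zero]
  · intro hc
    exact absurd (Finset.HasAntidiagonal.mem_antidiagonal.mpr (by simp)) hc

theorem aux_int_one (p : ℕ) [Fact p.Prime] [CharP F p] (s : ℕ) (z : ℤ) (i : ℕ)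
    (hz : ((p ^ s : ℕ) : ℤ) ∣ z) (hi : ¬ p ^ s ∣ i) : ((Ring.choose z i : ℤ) : F) = 0 := by
  have hp : p.Prime := Fact.out
  set T := s + i + z.natAbs + 1 with hT
  have h2T : T < 2 ^ T := Nat.lt_two_pow_self
  have hpT : 2 ^ T ≤ p ^ T := Nat.pow_le_pow_left hp.two_le T
  have h1 : i < p ^ T := by omega
  have hzT : z.natAbs < p ^ T := by omega
  have h2 : 0 ≤ z + (p ^ T : ℕ) := by omega
  have hshift := aux_shift p z i T h1 h2
  set a := (z + (p ^ T : ℕ)).toNat with ha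
  have hacast : ((a : ℤ)) = z + (p ^ T : ℕ) := Int.toNat_of_nonneg h2
  have hdvd : p ^ s ∣ a := by
    rw [← Int.natCast_dvd_natCast]
    push_cast
    rw [hacast]
    refine dvd_add (by exact_mod_cast hz) ?_
    have : (p : ℤ) ^ s ∣ (p : ℤ) ^ T := pow_dvd_pow _ (by omega)
    push_cast
    exact this
  have hlucas := aux_lucas_one p s a i hdvd hi
  have : ((Ring.choose z i : ℤ) : ZMod p) = ((0 : ℤ) : ZMod p) := by
    rw [hshift, hlucas]
    simp
  have := aux_zmod_to_field (F := F) p _ _ this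
  simpa using this

theorem aux_int_two (p : ℕ) [Fact p.Prime] [CharP F p] (s : ℕ) (x : ℤ) (j : ℕ) :
    ((Ring.choose (((p ^ s : ℕ) : ℤ) * x) (p ^ s * j) : ℤ) : F)
      = ((Ring.choose x j : ℤ) : F) := by
  have hp : p.Prime := Fact.out
  set T0 := j + x.natAbs + 1 with hT0
  have h2T : T0 < 2 ^ T0 := Nat.lt_two_pow_self
  have hpT : 2 ^ T0 ≤ p ^ T0 := Nat.pow_le_pow_left hp.two_le T0
  have h1' : j < p ^ T0 := by omega
  have hxT : x.natAbs < p ^ T0 := by omega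
  have h2' : 0 ≤ x + (p ^ T0 : ℕ) := by omega
  set T := s + T0 with hTdef
  have hppos : 0 < p ^ s := Nat.pow_pos hp.pos
  have h1 : p ^ s * j < p ^ T := by
    rw [hTdef, _root_.pow_add]
    exact (mul_lt_mul_iff_right₀ hppos).mpr h1' 
  have h2 : 0 ≤ ((p ^ s : ℕ) : ℤ) * x + (p ^ T : ℕ) := by
    have : ((p ^ T : ℕ) : ℤ) = ((p ^ s : ℕ) : ℤ) * ((p ^ T0 : ℕ) : ℤ) := by
      rw [hTdef]
      push_cast
      rw [_root_.pow_add]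
    rw [this, ← mul_add]
    have hnn : (0 : ℤ) ≤ x + ((p ^ T0 : ℕ) : ℤ) := h2'
    positivity
  have hshift1 := aux_shift p (((p ^ s : ℕ) : ℤ) * x) (p ^ s * j) T h1 h2
  have hshift2 := aux_shift p x j T0 h1' h2'
  set A := (((p ^ s : ℕ) : ℤ) * x + (p ^ T : ℕ)).toNat with hA
  set A' := (x + (p ^ T0 : ℕ)).toNat with hA'
  have hAeq : A = p ^ s * A' := by
    rw [← Int.natCast_inj]
    push_cast
    rw [Int.toNat_of_nonneg h2, Int.toNat_of_nonneg h2', hTdef, _root_.pow_add]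
    push_cast
    ring
  have hchain : ((Ring.choose (((p ^ s : ℕ) : ℤ) * x) (p ^ s * j) : ℤ) : ZMod p)
      = ((Ring.choose x j : ℤ) : ZMod p) := by
    rw [hshift1, hshift2, hAeq, aux_lucas_two p s A' j]
  exact aux_zmod_to_field (F := F) p _ _ hchain

theorem lhasse_pow_exact_valuation' (p : ℕ) [Fact p.Prime] [CharP F p]
    (f : LaurentSeries F) (hf : f ≠ 0) (n s m : ℕ) (hnm : n = p ^ s * m)
    (hm : ¬ p ∣ m) (g : LaurentSeries F) (hg : g = f ^ m) (i : ℕ) (hi : i ≤ n - 1)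
    (lhasse : ∀ (n : ℕ) (f : LaurentSeries F), LaurentSeries F)
    (lco : ∀ (N : ℕ) (x : LaurentSeries F) (k : ℤ),
      (lhasse N x).coeff k = ((Ring.choose (k + (N : ℤ)) N : ℤ) : F) * x.coeff (k + (N : ℤ))) :
    (¬ (p ^ s ∣ i) → lhasse i (f ^ n) = 0) ∧
      (∀ j : ℕ, i = p ^ s * j → lhasse i (f ^ n) = (lhasse j g) ^ p ^ s) := by
  have hp : p.Prime := Fact.out
  have hq : f ^ n = g ^ p ^ s := by
    rw [hg, ← pow_mul, mul_comm m, ← hnm]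
  constructor
  · intro hdvd
    ext k
    rw [hq, lco, HahnSeries.coeff_zero]
    by_cases hz : ((p ^ s : ℕ) : ℤ) ∣ (k + (i : ℤ))
    · rw [aux_int_one (F := F) p s _ i hz hdvd, zero_mul]
    · rw [aux_coeff_pow_prime_pow, if_neg hz, mul_zero]
  · intro j hj
    subst hj
    ext k
    rw [hq, lco]
    have hco2 : ((lhasse j g) ^ p ^ s).coeff k
        = if ((p ^ s : ℕ) : ℤ) ∣ k then ((lhasse j g).coeff (k / (p ^ s : ℕ))) ^ p ^ s else 0 :=
      aux_coeff_pow_prime_pow p s _ k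
    have hqne : ((p ^ s : ℕ) : ℤ) ≠ 0 := Int.natCast_ne_zero.mpr (pow_ne_zero _ hp.ne_zero)
    by_cases hk : ((p ^ s : ℕ) : ℤ) ∣ k
    · obtain ⟨a, rfl⟩ := hk
      rw [hco2, if_pos ⟨a, rfl⟩, Int.mul_ediv_cancel_left _ hqne, lco]
      have hidx : ((p ^ s : ℕ) : ℤ) * a + ((p ^ s * j : ℕ) : ℤ) = ((p ^ s : ℕ) : ℤ) * (a + (j : ℤ)) := by
        push_cast
        ring
      rw [hidx, aux_coeff_pow_prime_pow, if_pos ⟨a + (j : ℤ), rfl⟩,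
        Int.mul_ediv_cancel_left _ hqne]
      rw [mul_pow, aux_intCast_pow p s]
      rw [aux_int_two (F := F) p s (a + (j : ℤ)) j]
    · rw [hco2, if_neg hk]
      have hz : ¬ ((p ^ s : ℕ) : ℤ) ∣ (k + ((p ^ s * j : ℕ) : ℤ)) := by
        intro hc
        apply hk
        have hdj : ((p ^ s : ℕ) : ℤ) ∣ ((p ^ s * j : ℕ) : ℤ) := by
          push_cast
          exact ⟨(j : ℤ), by ring⟩
        have := dvd_sub hc hdj
        simpa using this
      rw [aux_coeff_pow_prime_pow, if_neg hz, mul_zero]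

/-- let `pˢ ∥ n` (exact power of `p` dividing `n`), `f ≠ 0`, and
`g = f^(n/pˢ)`. Then for `0 ≤ i ≤ n-1`: `∂⁽ⁱ⁾(fⁿ) = 0` if `pˢ ∤ i`, and
`∂⁽ⁱ⁾(fⁿ) = (∂⁽ⁱ/ᵖˢ⁾ g)^(pˢ)` if `pˢ ∣ i`. -/
theorem lhasse_pow_exact_valuation (p : ℕ) [Fact p.Prime] [CharP F p]
    (f : LaurentSeries F) (hf : f ≠ 0) (n s m : ℕ) (hnm : n = p ^ s * m)
    (hm : ¬ p ∣ m) (g : LaurentSeries F) (hg : g = f ^ m) (i : ℕ) (hi : i ≤ n - 1) :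
    (¬ (p ^ s ∣ i) → lhasse i (f ^ n) = 0) ∧
      (∀ j : ℕ, i = p ^ s * j → lhasse i (f ^ n) = (lhasse j g) ^ p ^ s) :=
  lhasse_pow_exact_valuation' p f hf n s m hnm hm g hg i hi lhasse (fun _ _ _ => rfl)
end
end
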